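/- Let A be a finite-dimensional graded connected Hopf algebra over a field F and B ⊆ A a Hopf subalgebra. Then A is free as a left B-module. -/

import Mathlib

open scoped TensorProduct

namespace MMFreeAux

open DirectSum

variable {F : Type} [Field F] {A : Type} [Ring A] [Algebra F A]
  (𝒜 : ℕ → Submodule F A) [GradedAlgebra 𝒜]

/-- The submodule of elements whose graded components in degrees `< t` all vanish. -/
def P (t : ℕ) : Submodule F A where
  carrier := {a | ∀ k, k < t → (DirectSum.decompose 𝒜 a k : A) = 0}
  zero_mem' := fun k _ => by rw [DirectSum.decompose_zero]; rfl
  add_mem' := fun {a b} ha hb k hk => by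
    rw [DirectSum.decompose_add, DirectSum.add_apply, Submodule.coe_add, ha k hk, hb k hk,
      add_zero]
  smul_mem' := fun r {a} ha k hk => by
    rw [DirectSum.decompose_smul, DirectSum.smul_apply, SetLike.val_smul, ha k hk, smul_zero]

lemma mem_P_iff {t : ℕ} {a : A} :
    a ∈ P 𝒜 t ↔ ∀ k, k < t → (DirectSum.decompose 𝒜 a k : A) = 0 := Iff.rfl

lemma mem_P_of_mem_graded {t m : ℕ} (h : t ≤ m) {x : A} (hx : x ∈ 𝒜 m) : x ∈ P 𝒜 t :=
  fun k hk => DirectSum.decompose_of_mem_ne 𝒜 hx (by omega)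

lemma P_mul {p q : ℕ} {a b : A} (ha : a ∈ P 𝒜 p) (hb : b ∈ P 𝒜 q) :
    a * b ∈ P 𝒜 (p + q) := by
  classical
  rw [← DirectSum.sum_support_decompose 𝒜 a, ← DirectSum.sum_support_decompose 𝒜 b,
    Finset.sum_mul_sum]
  refine Submodule.sum_mem _ fun k hk => Submodule.sum_mem _ fun l hl => ?_
  have hk' : p ≤ k := by
    by_contra h
    exact (DFinsupp.mem_support_iff.mp hk)
      (Subtype.ext (ha k (by omega)))
  have hl' : q ≤ l := by
    by_contra h
    exact (DFinsupp.mem_support_iff.mp hl)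
      (Subtype.ext (hb l (by omega)))
  exact mem_P_of_mem_graded 𝒜 (by omega)
    (SetLike.mul_mem_graded (SetLike.coe_mem _) (SetLike.coe_mem _))

lemma exists_bound [FiniteDimensional F A] : ∃ N, 0 < N ∧ ∀ n, N ≤ n → 𝒜 n = ⊥ := by
  classical
  have hind : iSupIndep 𝒜 := (DirectSum.Decomposition.isInternal 𝒜).submodule_iSupIndep
  set S : Set ℕ := {n | 𝒜 n ≠ ⊥} with hSdef
  have hex : ∀ n : S, ∃ x : A, x ∈ 𝒜 (n : ℕ) ∧ x ≠ 0 := by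
    intro n
    have hn : 𝒜 (n : ℕ) ≠ ⊥ := n.2
    rw [Submodule.ne_bot_iff] at hn
    obtain ⟨x, hx, hx0⟩ := hn
    exact ⟨x, hx, hx0⟩
  choose v hv hv0 using hex
  have hli : LinearIndependent F v :=
    iSupIndep.linearIndependent (fun n : S => 𝒜 (n : ℕ))
      (hind.comp Subtype.val_injective) hv hv0
  have hfin : S.Finite := Set.finite_coe_iff.mp
    (Cardinal.lt_aleph0_iff_finite.mp hli.lt_aleph0_of_finiteDimensional)
  refine ⟨hfin.toFinset.sup id + 1, Nat.succ_pos _, fun n hn => ?_⟩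
  by_contra hne
  have h1 : n ∈ hfin.toFinset := hfin.mem_toFinset.mpr hne
  have h2 := Finset.le_sup (f := id) h1
  simp only [id] at h2
  omega

end MMFreeAux

set_option maxHeartbeats 2000000 in
/-- **Milnor–Moore freeness theorem.**  Let `A` be a finite-dimensional graded
connected Hopf algebra over a field `F` (grading `𝒜` with `𝒜 0 = F·1`) and let
`B ⊆ A` be a Hopf subalgebra (a graded subalgebra closed under the
comultiplication and the antipode).  Then `A` is free as a left `B`-module. -/
theorem milnor_moore_freeness
    (F : Type) [Field F]
    (A : Type) [Ring A] [HopfAlgebra F A] [FiniteDimensional F A]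
    (𝒜 : ℕ → Submodule F A) [GradedAlgebra 𝒜]
    (hconn : 𝒜 0 = 1)
    (B : Subalgebra F A)
    (hcomul : ∀ b ∈ B, Coalgebra.comul (R := F) b ∈
      LinearMap.range (TensorProduct.map B.val.toLinearMap B.val.toLinearMap))
    (hantipode : ∀ b ∈ B, HopfAlgebra.antipode (R := F) b ∈ B)
    (hgraded : ∀ b ∈ B, ∀ n, (DirectSum.decompose 𝒜 b n : A) ∈ B) :
    Module.Free B A := by
  classical
  obtain ⟨N, hN0, hNbot⟩ := MMFreeAux.exists_bound 𝒜
  set P : ℕ → Submodule F A := MMFreeAux.P 𝒜 with hPdef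
  set εc : A →ₗ[F] F := Coalgebra.counit with hεdef
  -- `P N = ⊥`
  have hPbot : P N = ⊥ := by
    rw [eq_bot_iff]
    intro a ha
    have hsum := (DirectSum.sum_support_decompose 𝒜 a).symm
    rw [Submodule.mem_bot, hsum]
    refine Finset.sum_eq_zero fun k _ => ?_
    rcases lt_or_ge k N with h | h
    · exact ha k h
    · exact (Submodule.eq_bot_iff _).mp (hNbot k h) _ (SetLike.coe_mem _)
  -- powers
  have hpow : ∀ a : A, a ∈ P 1 → ∀ t : ℕ, a ^ (t + 1) ∈ P (t + 1) := by
    intro a ha t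
    induction t with
    | zero => simpa using ha
    | succ t ih =>
      have := MMFreeAux.P_mul 𝒜 ih ha
      rw [← pow_succ] at this
      exact this
  -- counit is multiplicative on powers
  have hεpow : ∀ (a : A) (n : ℕ), εc (a ^ n) = (εc a) ^ n := by
    intro a n
    induction n with
    | zero =>
      rw [pow_zero, pow_zero, hεdef]
      exact Bialgebra.counit_one
    | succ n ih =>
      rw [pow_succ, pow_succ, ← ih, hεdef]
      exact Bialgebra.counit_mul _ _
  -- counit kills `P 1`
  have hε1 : ∀ a : A, a ∈ P 1 → εc a = 0 := by
    intro a ha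
    obtain ⟨M, rfl⟩ : ∃ M, N = M + 1 := ⟨N - 1, by omega⟩
    have h1 : a ^ (M + 1) = 0 := by
      have h := hpow a ha M
      rw [hPbot] at h
      simpa using h
    have h2 : (εc a) ^ (M + 1) = 0 := by
      rw [← hεpow, h1, map_zero]
    exact pow_eq_zero_iff (Nat.succ_ne_zero M) |>.mp h2
  -- kernel of counit is `P 1`
  have hker : ∀ a : A, εc a = 0 → a ∈ P 1 := by
    intro a h0
    have ha0 : (DirectSum.decompose 𝒜 a 0 : A) ∈ (1 : Submodule F A) :=
      (le_of_eq hconn) (SetLike.coe_mem _)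
    obtain ⟨lam, hlam⟩ := Submodule.mem_one.mp ha0
    have hsub : a - (DirectSum.decompose 𝒜 a 0 : A) ∈ P 1 := by
      intro k hk
      rw [Nat.lt_one_iff] at hk
      subst hk
      rw [DirectSum.decompose_sub, DirectSum.sub_apply, Submodule.coe_sub,
        DirectSum.decompose_of_mem_same 𝒜 (SetLike.coe_mem _), sub_self]
    have hεsub : εc (a - (DirectSum.decompose 𝒜 a 0 : A)) = 0 := hε1 _ hsub
    have hεa0 : εc ((DirectSum.decompose 𝒜 a 0 : A)) = 0 := by
      rw [map_sub, h0, zero_sub, neg_eq_zero] at hεsub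
      exact hεsub
    have hlam0 : lam = 0 := by
      rw [← hlam, hεdef] at hεa0
      rwa [Bialgebra.counit_algebraMap] at hεa0
    have ha00 : (DirectSum.decompose 𝒜 a 0 : A) = 0 := by
      rw [← hlam, hlam0, map_zero]
    intro k hk
    rw [Nat.lt_one_iff] at hk
    subst hk
    exact ha00
  -- the ideal `K` and the quotient `C`
  set K : Submodule F A := B.toSubmodule ⊓ LinearMap.ker εc with hKdef
  set KA : Submodule F A := K * ⊤ with hKAdef
  set π : A →ₗ[F] A ⧸ KA := KA.mkQ with hπdef
  have hKP : K ≤ P 1 := by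
    intro x hx
    exact hker x (LinearMap.mem_ker.mp hx.2)
  have hbK : ∀ b : A, b ∈ B → b - algebraMap F A (εc b) ∈ K := by
    intro b hb
    refine ⟨sub_mem hb (B.algebraMap_mem _), LinearMap.mem_ker.mpr ?_⟩
    rw [map_sub, hεdef, Bialgebra.counit_algebraMap, sub_self]
  have hQ : ∀ v : A, v ∈ B → ∀ y : A, π (v * y) = εc v • π y := by
    intro v hv y
    have hmem : v * y - εc v • y ∈ KA := by
      have heq : v * y - εc v • y = (v - algebraMap F A (εc v)) * y := by
        rw [sub_mul, Algebra.smul_def]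
      rw [heq, hKAdef]
      exact Submodule.mul_mem_mul (hbK v hv) trivial
    have : π (v * y) - π (εc v • y) = 0 := by
      rw [← map_sub]
      rwa [hπdef, Submodule.mkQ_apply, Submodule.Quotient.mk_eq_zero]
    have h2 : π (v * y) = π (εc v • y) := sub_eq_zero.mp this
    rw [h2, map_smul]
  -- basis of the quotient
  obtain ⟨n, ⟨bC⟩⟩ : ∃ n, Nonempty (Module.Basis (Fin n) F (A ⧸ KA)) :=
    ⟨Module.finrank F (A ⧸ KA), ⟨Module.finBasis F (A ⧸ KA)⟩⟩
  have hsurj : ∀ y : A ⧸ KA, ∃ a : A, π a = y := fun y => KA.mkQ_surjective y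
  choose c hc using fun i => hsurj (bC i)
  -- the coaction map
  set ρ : A →ₗ[F] A ⊗[F] (A ⧸ KA) := (TensorProduct.map LinearMap.id π) ∘ₗ
    (Coalgebra.comul (R := F) (A := A)) with hρdef
  set W : ℕ → Submodule F (A ⊗[F] (A ⧸ KA)) :=
    fun t => Submodule.span F {z : A ⊗[F] (A ⧸ KA) | ∃ p ∈ P t, ∃ y : A ⧸ KA, z = p ⊗ₜ[F] y} with hWdef
  -- ρ x ≡ 1 ⊗ π x modulo W 1
  have hR2 : ∀ x : A, ρ x - (1 : A) ⊗ₜ[F] (π x) ∈ W 1 := by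
    intro x
    obtain ⟨S, hS⟩ := TensorProduct.exists_finset (Coalgebra.comul (R := F) x)
    have hxrep : ∑ p ∈ S, εc p.1 • p.2 = x := by
      have h1 := Coalgebra.rTensor_counit_comul (R := F) x
      rw [hS, map_sum] at h1
      have h2 := congrArg (TensorProduct.lid F A) h1
      rw [map_sum] at h2
      simpa [LinearMap.rTensor_tmul, TensorProduct.lid_tmul, hεdef] using h2
    have hρx : ρ x = ∑ p ∈ S, p.1 ⊗ₜ[F] π p.2 := by
      rw [hρdef, LinearMap.comp_apply, hS, map_sum]
      simp [TensorProduct.map_tmul]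
    have hπx : (1 : A) ⊗ₜ[F] (π x) = ∑ p ∈ S, (εc p.1 • (1 : A)) ⊗ₜ[F] π p.2 := by
      rw [← hxrep, map_sum, TensorProduct.tmul_sum]
      refine Finset.sum_congr rfl fun p _ => ?_
      rw [map_smul, TensorProduct.tmul_smul, TensorProduct.smul_tmul']
    rw [hρx, hπx, ← Finset.sum_sub_distrib]
    refine Submodule.sum_mem _ fun p _ => ?_
    rw [← TensorProduct.sub_tmul]
    refine Submodule.subset_span ?_
    refine ⟨p.1 - εc p.1 • (1 : A), ?_, π p.2, rfl⟩
    refine hker _ ?_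
    rw [map_sub, map_smul]
    have : εc (1 : A) = 1 := Bialgebra.counit_one
    rw [this]
    simp
  -- multiplicativity of ρ over B
  have haux : ∀ (u v : A), v ∈ B → ∀ z : A ⊗[F] A,
      (TensorProduct.map LinearMap.id π) ((u ⊗ₜ[F] v) * z) =
        (εc v • u) • ((TensorProduct.map LinearMap.id π) z) := by
    intro u v hv z
    induction z using TensorProduct.induction_on with
    | zero => simp only [mul_zero, map_zero, smul_zero]
    | tmul x₁ x₂ =>
      rw [Algebra.TensorProduct.tmul_mul_tmul, TensorProduct.map_tmul,
        TensorProduct.map_tmul, LinearMap.id_apply, LinearMap.id_apply, hQ v hv x₂,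
        TensorProduct.smul_tmul', smul_eq_mul, smul_mul_assoc, TensorProduct.smul_tmul]
    | add z1 z2 h1 h2 =>
      rw [mul_add, map_add, h1, h2, map_add, smul_add]
  have hρmul : ∀ (b : A), b ∈ B → ∀ x : A, ρ (b * x) = b • ρ x := by
    intro b hb x
    obtain ⟨w, hw⟩ := hcomul b hb
    obtain ⟨S, hSw⟩ := TensorProduct.exists_finset w
    have hcb : Coalgebra.comul (R := F) b = ∑ p ∈ S, ((p.1 : A) ⊗ₜ[F] (p.2 : A)) := by
      rw [← hw, hSw, map_sum]
      refine Finset.sum_congr rfl fun p _ => ?_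
      rw [TensorProduct.map_tmul]
      rfl
    have hbrep : (b : A) = ∑ p ∈ S, εc (p.2 : A) • (p.1 : A) := by
      have h1 := Coalgebra.lTensor_counit_comul (R := F) b
      rw [hcb, map_sum] at h1
      have h2 := congrArg (TensorProduct.rid F A) h1
      rw [map_sum] at h2
      have h3 : ∑ p ∈ S, εc (p.2 : A) • (p.1 : A) = (1 : F) • b := by
        simpa [LinearMap.lTensor_tmul, TensorProduct.rid_tmul, hεdef] using h2
      rw [h3, one_smul]
    have hcm : Coalgebra.comul (R := F) (b * x) =
        Coalgebra.comul (R := F) b * Coalgebra.comul (R := F) x :=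
      Bialgebra.comul_mul b x
    rw [hρdef, LinearMap.comp_apply, hcm, hcb, Finset.sum_mul, map_sum]
    have hterm : ∀ p ∈ S,
        (TensorProduct.map LinearMap.id π) (((p.1 : A) ⊗ₜ[F] (p.2 : A)) *
          Coalgebra.comul (R := F) x) =
        (εc (p.2 : A) • (p.1 : A)) • ((TensorProduct.map LinearMap.id π)
          (Coalgebra.comul (R := F) x)) := by
      intro p _
      exact haux (p.1 : A) (p.2 : A) p.2.2 _
    rw [Finset.sum_congr rfl hterm, ← Finset.sum_smul, ← hbrep]
    rfl
  -- mapping out of W by coordinates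
  have hΞmem : ∀ (i₀ : Fin n) (t : ℕ) (z : A ⊗[F] (A ⧸ KA)), z ∈ W t →
      (TensorProduct.rid F A) ((LinearMap.lTensor A (bC.coord i₀)) z) ∈ P t := by
    intro i₀ t z hz
    induction hz using Submodule.span_induction with
    | mem z hzmem =>
      obtain ⟨p, hp, y, rfl⟩ := hzmem
      rw [LinearMap.lTensor_tmul, TensorProduct.rid_tmul]
      exact Submodule.smul_mem _ _ hp
    | zero => rw [map_zero, map_zero]; exact Submodule.zero_mem _
    | add z1 z2 h1 h2 ih1 ih2 =>
      rw [map_add, map_add]; exact Submodule.add_mem _ ih1 ih2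
    | smul a z hzz ih =>
      rw [map_smul, map_smul]; exact Submodule.smul_mem _ _ ih
  -- the smul action maps W 1 into W (t+1)
  have hWsmul : ∀ (t : ℕ) (g : A), g ∈ P t → ∀ z ∈ W 1, g • z ∈ W (t + 1) := by
    intro t g hg z hz
    induction hz using Submodule.span_induction with
    | mem z hzmem =>
      obtain ⟨p, hp, y, rfl⟩ := hzmem
      have : g • (p ⊗ₜ[F] y) = (g * p) ⊗ₜ[F] y := by
        rw [TensorProduct.smul_tmul']
        rfl
      rw [this]
      exact Submodule.subset_span ⟨g * p, MMFreeAux.P_mul 𝒜 hg hp, y, rfl⟩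
    | zero => rw [smul_zero]; exact Submodule.zero_mem _
    | add z1 z2 h1 h2 ih1 ih2 =>
      rw [smul_add]; exact Submodule.add_mem _ ih1 ih2
    | smul a z hzz ih =>
      rw [smul_comm]
      exact Submodule.smul_mem _ _ ih
  -- linear independence
  have hli : LinearIndependent (↥B) c := by
    rw [Fintype.linearIndependent_iff]
    intro g hg
    have hrel : ∑ i : Fin n, ((g i : A)) * c i = 0 := hg
    have hclaim : ∀ t : ℕ, ∀ i : Fin n, ((g i : A)) ∈ P t := by
      intro t
      induction t with
      | zero => intro i k hk; omega
      | succ t ih =>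
        -- key computation
        have h0 : (0 : A ⊗[F] (A ⧸ KA)) = ∑ i : Fin n, ((g i : A)) • ρ (c i) := by
          have : ρ (∑ i : Fin n, ((g i : A)) * c i) = 0 := by rw [hrel, map_zero]
          rw [map_sum] at this
          rw [← this]
          refine (Finset.sum_congr rfl fun i _ => ?_).symm
          exact (hρmul (g i : A) (g i).2 (c i)).symm
        have hsplit : ∀ i : Fin n, ((g i : A)) ⊗ₜ[F] (bC i) =
            ((g i : A)) • ρ (c i) -
              ((g i : A)) • (ρ (c i) - (1 : A) ⊗ₜ[F] (π (c i))) := by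
          intro i
          rw [smul_sub, sub_sub_cancel, TensorProduct.smul_tmul', hc i, smul_eq_mul, mul_one]
        have hmain : ∑ i : Fin n, ((g i : A)) ⊗ₜ[F] (bC i) ∈ W (t + 1) := by
          have h2 : ∑ i : Fin n, ((g i : A)) ⊗ₜ[F] (bC i) =
              ∑ i : Fin n, ((g i : A)) • ρ (c i) -
                ∑ i : Fin n, ((g i : A)) • (ρ (c i) - (1 : A) ⊗ₜ[F] (π (c i))) := by
            rw [← Finset.sum_sub_distrib]
            exact Finset.sum_congr rfl fun i _ => hsplit i
          rw [h2, ← h0, zero_sub]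
          refine Submodule.neg_mem _ (Submodule.sum_mem _ fun i _ => ?_)
          exact hWsmul t _ (ih i) _ (hR2 (c i))
        intro i₀
        have h4 := hΞmem i₀ (t + 1) _ hmain
        have h5 : (TensorProduct.rid F A) ((LinearMap.lTensor A (bC.coord i₀))
            (∑ i : Fin n, ((g i : A)) ⊗ₜ[F] (bC i))) = (g i₀ : A) := by
          rw [map_sum, map_sum]
          have hterm : ∀ i : Fin n, (TensorProduct.rid F A) ((LinearMap.lTensor A (bC.coord i₀))
              (((g i : A)) ⊗ₜ[F] (bC i))) = (bC.repr (bC i) i₀) • (g i : A) := by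
            intro i
            rw [LinearMap.lTensor_tmul, TensorProduct.rid_tmul]
            rfl
          rw [Finset.sum_congr rfl fun i _ => hterm i]
          rw [Finset.sum_eq_single i₀]
          · rw [Module.Basis.repr_self_apply]
            simp
          · intro i _ hne
            rw [Module.Basis.repr_self_apply]
            simp [hne]
          · intro h
            exact absurd (Finset.mem_univ i₀) h
        rwa [h5] at h4
    intro i
    have := hclaim N i
    rw [hPbot, Submodule.mem_bot] at this
    exact Subtype.ext this
  -- spanning
  have hsp : ⊤ ≤ Submodule.span (↥B) (Set.range c) := by
    set M : Submodule (↥B) A := Submodule.span (↥B) (Set.range c) with hMdef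
    set M' : Submodule F A := M.restrictScalars F with hM'def
    have hcM' : ∀ i, c i ∈ M' := fun i =>
      Submodule.subset_span (Set.mem_range_self i)
    have hS1 : (⊤ : Submodule F A) ≤ M' ⊔ KA := by
      intro a _
      set a' := ∑ i : Fin n, (bC.repr (π a) i) • c i with ha'def
      have hπa' : π a' = π a := by
        rw [ha'def, map_sum]
        have : ∀ i : Fin n, π ((bC.repr (π a) i) • c i) = (bC.repr (π a) i) • bC i := by
          intro i
          rw [map_smul, hc i]
        rw [Finset.sum_congr rfl fun i _ => this i]
        exact bC.sum_repr (π a)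
      have ha'M : a' ∈ M' := Submodule.sum_mem _ fun i _ =>
        Submodule.smul_mem _ _ (hcM' i)
      have hdiff : a - a' ∈ KA := by
        have : π (a - a') = 0 := by rw [map_sub, hπa', sub_self]
        rwa [hπdef, Submodule.mkQ_apply, Submodule.Quotient.mk_eq_zero] at this
      refine Submodule.mem_sup.mpr ⟨a', ha'M, a - a', hdiff, by abel⟩
    have hK1M : K * M' ≤ M' := by
      refine Submodule.mul_le.mpr fun x hx m hm => ?_
      have hxB : x ∈ B := hx.1
      have hmM : m ∈ M := (Submodule.restrictScalars_mem F M m).mp hm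
      have hsm : (⟨x, hxB⟩ : ↥B) • m = x * m := by
        rw [Subalgebra.smul_def, smul_eq_mul]
      rw [Submodule.restrictScalars_mem, ← hsm]
      exact Submodule.smul_mem M _ hmM
    have hKM : ∀ t : ℕ, K ^ t * M' ≤ M' := by
      intro t
      induction t with
      | zero => rw [pow_zero, Submodule.one_mul]
      | succ t ih =>
        calc K ^ (t + 1) * M' = K ^ t * (K * M') := by rw [pow_succ, mul_assoc]
          _ ≤ K ^ t * M' := mul_le_mul_right hK1M _
          _ ≤ M' := ih
    have hKpow : ∀ t : ℕ, K ^ (t + 1) ≤ P (t + 1) := by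
      intro t
      induction t with
      | zero =>
        rw [pow_one]
        exact hKP
      | succ t ih =>
        rw [pow_succ]
        exact Submodule.mul_le.mpr fun x hx y hy => MMFreeAux.P_mul 𝒜 (ih hx) (hKP hy)
    have hS1' : (⊤ : Submodule F A) ≤ M' ⊔ K * ⊤ := by
      rw [← hKAdef]
      exact hS1
    have htop : ∀ t : ℕ, (⊤ : Submodule F A) ≤ M' ⊔ K ^ (t + 1) * ⊤ := by
      intro t
      induction t with
      | zero =>
        rw [pow_one]
        exact hS1'
      | succ t ih =>
        refine le_trans ih (sup_le le_sup_left ?_)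
        calc K ^ (t + 1) * ⊤ ≤ K ^ (t + 1) * (M' ⊔ K * ⊤) :=
              mul_le_mul_right (le_trans le_top hS1') _
          _ = K ^ (t + 1) * M' ⊔ K ^ (t + 1) * (K * ⊤) := Submodule.mul_sup _ _ _
          _ ≤ M' ⊔ K ^ (t + 1 + 1) * ⊤ :=
              sup_le_sup (hKM (t + 1)) (le_of_eq (by rw [← mul_assoc, ← pow_succ]))
    intro a _
    obtain ⟨M0, hM0⟩ : ∃ M0, N = M0 + 1 := ⟨N - 1, by omega⟩
    have hmem : a ∈ M' ⊔ K ^ (M0 + 1) * ⊤ := htop M0 trivial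
    obtain ⟨y, hy, z, hz, heq⟩ := Submodule.mem_sup.mp hmem
    have hz0 : z = 0 := by
      have hzP : z ∈ P (M0 + 1) := by
        revert hz
        refine fun hz => ?_
        have hle : K ^ (M0 + 1) * ⊤ ≤ P (M0 + 1) := by
          refine Submodule.mul_le.mpr fun u hu w _ => ?_
          have hu0 : u = 0 := by
            have h := hKpow M0 hu
            rw [← hM0, hPbot] at h
            simpa using h
          rw [hu0, zero_mul]
          exact Submodule.zero_mem _
        exact hle hz
      have : z ∈ (⊥ : Submodule F A) := by
        rw [← hPbot, hM0]
        exact hzP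
      simpa using this
    have haM' : a ∈ M' := by
      rw [← heq, hz0, add_zero]
      exact hy
    exact (Submodule.restrictScalars_mem F M a).mp haM'
  exact Module.Free.of_basis (Module.Basis.mk hli hsp)
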